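/- For every real ν' > 2, there exists a unique a > 1 satisfying a log a − a + 1 − (a − 1)²/ν' = 0. -/

import Mathlib

open Real Set

/-- Quadratic lower bound on log: for `a ≥ 1`, `(a-1) - (a-1)^2/2 ≤ log a`. -/
lemma aux_log_ge_quad {a : ℝ} (ha : 1 ≤ a) :
    (a - 1) - (a - 1) ^ 2 / 2 ≤ Real.log a := by
  set q : ℝ → ℝ := fun x => Real.log x - (x - 1) + (x - 1) ^ 2 / 2 with hq
  have hder : ∀ x ∈ interior (Set.Ici (1:ℝ)),
      HasDerivAt q (1 / x - 1 + (x - 1)) x := by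
    intro x hx
    rw [interior_Ici] at hx
    have hx0 : x ≠ 0 := by have : (1:ℝ) < x := hx; linarith
    have h1 : HasDerivAt (fun x : ℝ => Real.log x) (1 / x) x := by
      simpa [one_div] using Real.hasDerivAt_log hx0
    have h2 : HasDerivAt (fun x : ℝ => x - 1) (1 : ℝ) x := by
      simpa using (hasDerivAt_id x).sub_const 1
    have h3 : HasDerivAt (fun x : ℝ => (x - 1) ^ 2 / 2) ((x - 1)) x := by
      have := (h2.pow 2).div_const 2
      refine this.congr_deriv ?_
      ring
    exact (h1.sub h2).add h3
  have hmono : MonotoneOn q (Set.Ici 1) := by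
    apply monotoneOn_of_deriv_nonneg (convex_Ici 1)
    · intro x hx
      have hx0 : x ≠ 0 := by have : (1:ℝ) ≤ x := hx; linarith
      exact (((Real.continuousAt_log hx0).continuousWithinAt.sub
        (continuousWithinAt_id.sub continuousWithinAt_const)).add
        (((continuousWithinAt_id.sub continuousWithinAt_const).pow 2).div_const 2))
    · intro x hx
      exact ((hder x hx).differentiableAt).differentiableWithinAt
    · intro x hx
      rw [(hder x hx).deriv]
      rw [interior_Ici] at hx
      have hx1 : (1:ℝ) < x := hx
      have hx0 : (0:ℝ) < x := by linarith
      have key : 1 / x - 1 + (x - 1) = (x - 1) ^ 2 / x := by field_simp; ring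
      rw [key]; positivity
  have := hmono (Set.self_mem_Ici) (Set.mem_Ici.2 ha) ha
  simp only [hq, Real.log_one] at this ⊢
  nlinarith [this]

/-- For `a > 1`, `2*(a-1) - (a+1) * log a < 0`. -/
lemma aux_p_neg {a : ℝ} (ha : 1 < a) :
    2 * (a - 1) - (a + 1) * Real.log a < 0 := by
  set p : ℝ → ℝ := fun x => 2 * (x - 1) - (x + 1) * Real.log x with hp
  have hder : ∀ x ∈ interior (Set.Ici (1:ℝ)),
      HasDerivAt p (2 - (Real.log x + (x + 1) * (1 / x))) x := by
    intro x hx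
    rw [interior_Ici] at hx
    have hx0 : x ≠ 0 := by have : (1:ℝ) < x := hx; linarith
    have h1 : HasDerivAt (fun x : ℝ => Real.log x) (1 / x) x := by
      simpa [one_div] using Real.hasDerivAt_log hx0
    have h2 : HasDerivAt (fun x : ℝ => x + 1) (1 : ℝ) x := by
      simpa using (hasDerivAt_id x).add_const 1
    have h3 : HasDerivAt (fun x : ℝ => (x + 1) * Real.log x)
        (1 * Real.log x + (x + 1) * (1 / x)) x := h2.mul h1
    have h4 : HasDerivAt (fun x : ℝ => 2 * (x - 1)) (2 : ℝ) x := by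
      simpa using ((hasDerivAt_id x).sub_const 1).const_mul 2
    exact (h4.sub h3).congr_deriv (by ring)
  have hanti : StrictAntiOn p (Set.Ici 1) := by
    apply strictAntiOn_of_deriv_neg (convex_Ici 1)
    · intro x hx
      have hx0 : x ≠ 0 := by have : (1:ℝ) ≤ x := hx; linarith
      exact (continuousWithinAt_const.mul
        (continuousWithinAt_id.sub continuousWithinAt_const)).sub
        ((continuousWithinAt_id.add continuousWithinAt_const).mul
          (Real.continuousAt_log hx0).continuousWithinAt)
    · intro x hx
      rw [(hder x hx).deriv]
      rw [interior_Ici] at hx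
      have hx1 : (1:ℝ) < x := hx
      have hx0 : (0:ℝ) < x := by linarith
      -- log x > 1 - 1/x
      have hlog : Real.log (1 / x) < 1 / x - 1 :=
        Real.log_lt_sub_one_of_pos (by positivity) (by
          intro h
          rw [div_eq_one_iff_eq hx0.ne'] at h
          linarith)
      rw [Real.log_div one_ne_zero hx0.ne', Real.log_one] at hlog
      have hxx : (x + 1) * (1 / x) = 1 + 1 / x := by field_simp
      rw [hxx]
      linarith
  have := hanti (Set.self_mem_Ici) (Set.mem_Ici.2 ha.le) ha
  simpa [hp] using this

/-- `h a = (a log a - a + 1)/(a-1)^2` is strictly antitone on `(1, ∞)`. -/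
lemma aux_h_anti :
    StrictAntiOn (fun a : ℝ => (a * Real.log a - a + 1) / (a - 1) ^ 2) (Set.Ioi 1) := by
  set h : ℝ → ℝ := fun a => (a * Real.log a - a + 1) / (a - 1) ^ 2 with hh
  have hder : ∀ x ∈ interior (Set.Ioi (1:ℝ)),
      HasDerivAt h (((Real.log x + 1 - 1) * (x - 1) ^ 2 -
        (x * Real.log x - x + 1) * (2 * (x - 1))) / ((x - 1) ^ 2) ^ 2) x := by
    intro x hx
    rw [interior_Ioi] at hx
    have hx1 : (1:ℝ) < x := hx
    have hx0 : x ≠ 0 := by linarith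
    have h1 : HasDerivAt (fun x : ℝ => x * Real.log x) (Real.log x + 1) x := by
      have := (hasDerivAt_id x).mul (Real.hasDerivAt_log hx0)
      refine this.congr_deriv ?_
      field_simp
      rw [id_eq]; ring
    have h2 : HasDerivAt (fun x : ℝ => x * Real.log x - x + 1) (Real.log x + 1 - 1) x := by
      simpa using (h1.sub (hasDerivAt_id x)).add_const 1
    have h3 : HasDerivAt (fun x : ℝ => (x - 1) ^ 2) (2 * (x - 1)) x := by
      have := (((hasDerivAt_id x).sub_const 1).pow 2)
      refine this.congr_deriv ?_
      simp [id_eq]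
    have hne : (x - 1) ^ 2 ≠ 0 := pow_ne_zero 2 (sub_ne_zero.2 (ne_of_gt hx1))
    exact h2.div h3 hne
  apply strictAntiOn_of_deriv_neg (convex_Ioi 1)
  · intro x hx
    have hx1 : (1:ℝ) < x := hx
    exact ((hder x (by rwa [interior_Ioi])).differentiableAt).continuousAt.continuousWithinAt
  · intro x hx
    rw [(hder x hx).deriv]
    rw [interior_Ioi] at hx
    have hx1 : (1:ℝ) < x := hx
    apply div_neg_of_neg_of_pos
    · have hp := aux_p_neg hx1
      nlinarith [sub_pos.2 hx1]
    · have h := sub_pos.2 hx1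
      positivity

theorem stmt11 (ν' : ℝ) (hν : 2 < ν') :
    ∃! a : ℝ, 1 < a ∧ a * Real.log a - a + 1 - (a - 1) ^ 2 / ν' = 0 := by
  have hν0 : (0:ℝ) < ν' := by linarith
  set F : ℝ → ℝ := fun a => a * Real.log a - a + 1 - (a - 1) ^ 2 / ν' with hF
  -- a root of F in (1,∞) satisfies h a = 1/ν'
  have hroot : ∀ b : ℝ, 1 < b → F b = 0 →
      (b * Real.log b - b + 1) / (b - 1) ^ 2 = 1 / ν' := by
    intro b hb1 hb
    have hbne : (b - 1) ^ 2 ≠ 0 := pow_ne_zero 2 (sub_ne_zero.2 (ne_of_gt hb1))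
    have h1 : b * Real.log b - b + 1 = (b - 1) ^ 2 / ν' := by
      simp only [hF] at hb; linarith
    rw [h1]
    rw [div_right_comm, div_self hbne]
  -- lower point a₁ with F a₁ > 0
  set a₁ : ℝ := 3 / 2 - 1 / ν' with ha₁
  clear_value a₁
  have hinv : 0 < 1 / ν' := by positivity
  have hinv2 : 1 / ν' < 1 / 2 := by
    rw [div_lt_div_iff₀ hν0 two_pos]; linarith
  have ha₁1 : 1 < a₁ := by simp only [ha₁]; linarith
  have hFa₁ : 0 < F a₁ := by
    have hq := aux_log_ge_quad ha₁1.le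
    have ha₁pos : (0:ℝ) < a₁ := by linarith
    have h1 : a₁ * ((a₁ - 1) - (a₁ - 1) ^ 2 / 2) ≤ a₁ * Real.log a₁ :=
      mul_le_mul_of_nonneg_left hq ha₁pos.le
    have key : a₁ * ((a₁ - 1) - (a₁ - 1) ^ 2 / 2) - a₁ + 1 - (a₁ - 1) ^ 2 / ν'
        = (a₁ - 1) ^ 2 * (1 - a₁ / 2 - 1 / ν') := by
      field_simp
      ring
    have hpos : 0 < (a₁ - 1) ^ 2 * (1 - a₁ / 2 - 1 / ν') := by
      apply mul_pos
      · have : (0:ℝ) < a₁ - 1 := by linarith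
        positivity
      · simp only [ha₁]; linarith
    simp only [hF]
    nlinarith
  -- upper point A with F A < 0
  set A : ℝ := 256 * ν' ^ 2 with hA
  clear_value A
  have hA2 : (2:ℝ) ≤ A := by rw [hA]; nlinarith
  have ha₁A : a₁ ≤ A := by
    have : a₁ < 3 / 2 := by simp only [ha₁]; linarith
    linarith
  have hlogA : Real.log A < 32 * ν' := by
    have h16 : (0:ℝ) < 16 * ν' := by linarith
    have hAsq : A = (16 * ν') ^ 2 := by rw [hA]; ring
    rw [hAsq, Real.log_pow]
    have := Real.log_lt_sub_one_of_pos h16 (by nlinarith)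
    push_cast
    nlinarith
  have hFA : F A < 0 := by
    have hApos : (0:ℝ) < A := by linarith
    have h1 : A * Real.log A < A * (32 * ν') :=
      mul_lt_mul_of_pos_left hlogA hApos
    have h2 : A ^ 2 / 4 / ν' ≤ (A - 1) ^ 2 / ν' := by
      apply div_le_div_of_nonneg_right ?_ hν0.le
      nlinarith
    have h3 : A ^ 2 / 4 / ν' = 64 * ν' * A := by
      rw [hA]; field_simp; ring
    simp only [hF]
    nlinarith
  -- intermediate value theorem
  have hFcont : ContinuousOn F (Set.Icc a₁ A) := by
    have hlog : ContinuousOn Real.log (Set.Icc a₁ A) :=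
      Real.continuousOn_log.mono (fun x hx => by
        have h := hx.1
        simp only [Set.mem_compl_iff, Set.mem_singleton_iff]
        intro h0
        rw [h0] at h
        linarith)
    exact (((continuousOn_id.mul hlog).sub continuousOn_id).add continuousOn_const).sub
      (((continuousOn_id.sub continuousOn_const).pow 2).div_const ν')
  have h0mem : (0:ℝ) ∈ Set.Ioo (F A) (F a₁) := ⟨hFA, hFa₁⟩
  obtain ⟨c, hc, hFc0⟩ := intermediate_value_Ioo' ha₁A hFcont h0mem
  have hc1 : 1 < c := lt_trans ha₁1 hc.1
  refine ⟨c, ⟨hc1, hFc0⟩, ?_⟩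
  rintro b ⟨hb1, hb0⟩
  exact aux_h_anti.injOn (Set.mem_Ioi.2 hb1) (Set.mem_Ioi.2 hc1)
    (by rw [hroot b hb1 hb0, hroot c hc1 hFc0])
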